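/- Lemma B.2 (Coefficient of Variation Inequality): Under the reward structure above, the coefficients of variation satisfy CV(r^draft) ≥ CV(r^sol). -/

import Mathlib

open Finset

/-- Population mean of a vector `r : Fin n → ℝ`. -/
noncomputable def mean {n : ℕ} (r : Fin n → ℝ) : ℝ := (∑ i, r i) / n

/-- Population variance of a vector `r : Fin n → ℝ`. -/
noncomputable def pvar {n : ℕ} (r : Fin n → ℝ) : ℝ := (∑ i, (r i - mean r) ^ 2) / n

/-- Population standard deviation. -/
noncomputable def pstd {n : ℕ} (r : Fin n → ℝ) : ℝ := Real.sqrt (pvar r)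

/-- Coefficient of variation. -/
noncomputable def cv {n : ℕ} (r : Fin n → ℝ) : ℝ := pstd r / mean r

/-- Standardized (group-relative) advantage of the `i`-th entry. -/
noncomputable def adv {n : ℕ} (r : Fin n → ℝ) (i : Fin n) : ℝ := (r i - mean r) / pstd r

lemma pvar_eq {n : ℕ} (hn : 1 ≤ n) (r : Fin n → ℝ) :
    pvar r = (∑ i, (r i) ^ 2) / n - (mean r) ^ 2 := by
  have hN : (0:ℝ) < n := by exact_mod_cast Nat.lt_of_lt_of_le Nat.zero_lt_one hn
  have hsum : ∑ i, r i = n * mean r := by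
    unfold mean; field_simp
  have key : ∑ i, (r i - mean r) ^ 2
      = (∑ i, (r i) ^ 2) - (n : ℝ) * (mean r) ^ 2 := by
    have : ∑ i, (r i - mean r) ^ 2
        = (∑ i, (r i) ^ 2) - 2 * mean r * (∑ i, r i) + (n : ℝ) * (mean r) ^ 2 := by
      rw [Finset.sum_congr rfl (fun i _ => sub_sq (r i) (mean r)),
        Finset.sum_add_distrib, Finset.sum_sub_distrib, ← Finset.sum_mul,
        Finset.sum_const, Finset.card_univ, Fintype.card_fin, nsmul_eq_mul]
      have h2 : ∑ i, 2 * r i = 2 * ∑ i, r i := by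
        rw [Finset.mul_sum]
      rw [h2]; ring
    rw [this, hsum]; ring
  unfold pvar
  rw [key, sub_div]
  congr 1
  field_simp

/-- Lemma B.2 (Coefficient of Variation Inequality): `cv rdraft ≥ cv rsol`. -/
theorem stmt_3 {n : ℕ} (hn : 1 ≤ n) (rsol ρ rdraft : Fin n → ℝ)
    (hsol : ∀ i, rsol i = 0 ∨ rsol i = 1)
    (hρ : ∀ i, 0 ≤ ρ i ∧ ρ i ≤ 1)
    (hdraft : ∀ i, rdraft i = ρ i * rsol i)
    (hn1 : 1 ≤ (Finset.univ.filter (fun i => rsol i = 1)).card)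
    (hn0 : 1 ≤ (Finset.univ.filter (fun i => rsol i = 0)).card)
    (hj : ∃ j, rsol j = 1 ∧ 0 < ρ j) :
    cv rsol ≤ cv rdraft := by
  obtain ⟨j, hj1, hjρ⟩ := hj
  have hN : (0:ℝ) < n := by exact_mod_cast Nat.lt_of_lt_of_le Nat.zero_lt_one hn
  -- basic pointwise facts
  have hs_sq : ∀ i, rsol i ^ 2 = rsol i := by
    intro i; rcases hsol i with h | h <;> simp [h]
  have hs_nonneg : ∀ i, 0 ≤ rsol i := by
    intro i; rcases hsol i with h | h <;> simp [h]
  have hd_nonneg : ∀ i, 0 ≤ rdraft i := by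
    intro i; rw [hdraft i]; exact mul_nonneg (hρ i).1 (hs_nonneg i)
  have hsd : ∀ i, rsol i * rdraft i = rdraft i := by
    intro i; rcases hsol i with h | h <;> simp [hdraft i, h]
  -- sums
  set Ss := ∑ i, rsol i with hSs_def
  set Sd := ∑ i, rdraft i with hSd_def
  set Qd := ∑ i, (rdraft i) ^ 2 with hQd_def
  have hQs : ∑ i, (rsol i) ^ 2 = Ss := Finset.sum_congr rfl (fun i _ => hs_sq i)
  have hSs_pos : 0 < Ss := by
    apply Finset.sum_pos' (fun i _ => hs_nonneg i)
    exact ⟨j, Finset.mem_univ j, by rw [hj1]; norm_num⟩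
  have hSd_pos : 0 < Sd := by
    apply Finset.sum_pos' (fun i _ => hd_nonneg i)
    exact ⟨j, Finset.mem_univ j, by rw [hdraft j, hj1]; simpa using hjρ⟩
  have hCS : Sd ^ 2 ≤ Ss * Qd := by
    have h := Finset.sum_mul_sq_le_sq_mul_sq Finset.univ rsol rdraft
    rw [hQs] at h
    have : ∑ i, rsol i * rdraft i = Sd := Finset.sum_congr rfl (fun i _ => hsd i)
    rwa [this] at h
  -- means
  have hms : mean rsol = Ss / n := rfl
  have hmd : mean rdraft = Sd / n := rfl
  have hms_pos : 0 < mean rsol := by rw [hms]; positivity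
  have hmd_pos : 0 < mean rdraft := by rw [hmd]; positivity
  -- variance nonneg
  have hpv : ∀ r : Fin n → ℝ, 0 ≤ pvar r := by
    intro r; unfold pvar; positivity
  -- cv as sqrt of ratio
  have hcv : ∀ r : Fin n → ℝ, 0 < mean r → cv r = Real.sqrt (pvar r / (mean r) ^ 2) := by
    intro r hm
    unfold cv pstd
    rw [Real.sqrt_div (hpv r), Real.sqrt_sq hm.le]
  rw [hcv rsol hms_pos, hcv rdraft hmd_pos]
  apply Real.sqrt_le_sqrt
  rw [pvar_eq hn rsol, pvar_eq hn rdraft, hQs]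
  rw [hms, hmd]
  rw [div_le_div_iff₀ (by positivity) (by positivity)]
  have hkey : Sd ^ 2 * Ss ≤ Qd * Ss ^ 2 := by nlinarith [mul_le_mul_of_nonneg_left hCS hSs_pos.le]
  have hn4 : (0:ℝ) < (n:ℝ)^4 := by positivity
  field_simp
  have hCSn := mul_le_mul_of_nonneg_left hCS hN.le
  rw [hQd_def] at hCSn
  rw [hQd_def] at hkey
  nlinarith [mul_le_mul_of_nonneg_left hkey (pow_nonneg hN.le 7),
    mul_le_mul_of_nonneg_left hkey (pow_nonneg hN.le 5),
    mul_le_mul_of_nonneg_left hkey (pow_nonneg hN.le 3)]
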